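/- Let M₂ be the n×n matrix with α on the subdiagonal, γ on the superdiagonal, and zeros elsewhere, where α·γ ≠ 0. Then the eigenvalues of M₂ are 2·√(αγ)·cos(kπ/(n+1)) for k = 1,…,n (working over ℂ with a fixed square root of αγ). -/

import Mathlib

open Polynomial Matrix

lemma charpoly_eval_aux {n : ℕ} (M : Matrix (Fin n) (Fin n) ℂ) (μ : ℂ) :
    M.charpoly.eval μ = (μ • (1 : Matrix (Fin n) (Fin n) ℂ) - M).det := by
  rw [Matrix.charpoly, ← Polynomial.coe_evalRingHom, RingHom.map_det]
  congr 1
  ext i j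
  by_cases h : i = j
  · subst h
    simp [Matrix.charmatrix_apply_eq, Matrix.one_apply]
  · simp [Matrix.charmatrix_apply_ne _ _ _ h, Matrix.one_apply, h]

lemma isRoot_aux {n : ℕ} (α γ s : ℂ) (hα : α ≠ 0) (hγ : γ ≠ 0) (hs0 : s ≠ 0)
    (hs : s ^ 2 = α * γ)
    (M₂ : Matrix (Fin n) (Fin n) ℂ)
    (hM : ∀ i j : Fin n, M₂ i j =
      if (i : ℕ) = (j : ℕ) + 1 then α else if (j : ℕ) = (i : ℕ) + 1 then γ else 0)
    (k : ℕ) (hk1 : 1 ≤ k) (hk2 : k ≤ n) :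
    M₂.charpoly.IsRoot (2 * s * Complex.cos ((k : ℂ) * Real.pi / ((n : ℂ) + 1))) := by
  set θ : ℝ := k * Real.pi / (n + 1) with hθ
  have hθc : (k : ℂ) * Real.pi / ((n : ℂ) + 1) = (θ : ℂ) := by
    rw [hθ]; push_cast; ring
  set μ : ℂ := 2 * s * Complex.cos (θ : ℂ) with hμ
  have hC : Complex.cos (θ : ℂ) = ((Real.cos θ : ℝ) : ℂ) := (Complex.ofReal_cos θ).symm
  set w : ℕ → ℂ := fun j => (α / s) ^ j * ((Real.sin (j * θ) : ℝ) : ℂ) with hw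
  have hw0 : w 0 = 0 := by simp [hw]
  have hwn : w (n + 1) = 0 := by
    have h1 : (((n + 1 : ℕ) : ℝ)) * θ = (k : ℝ) * Real.pi := by
      rw [hθ]; push_cast; field_simp
    simp only [hw]
    rw [h1, Real.sin_nat_mul_pi, Complex.ofReal_zero, mul_zero]
  have hrec : ∀ j : ℕ, α * w j + γ * w (j + 2) = μ * w (j + 1) := by
    intro j
    have hsinR : Real.sin ((j : ℝ) * θ) + Real.sin (((j : ℝ) + 2) * θ)
        = 2 * Real.sin (((j : ℝ) + 1) * θ) * Real.cos θ := by
      have h1 := Real.sin_add (((j : ℝ) + 1) * θ) θ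
      have h2 := Real.sin_sub (((j : ℝ) + 1) * θ) θ
      have e1 : ((j : ℝ) + 1) * θ + θ = ((j : ℝ) + 2) * θ := by ring
      have e2 : ((j : ℝ) + 1) * θ - θ = (j : ℝ) * θ := by ring
      rw [e1] at h1; rw [e2] at h2
      linarith
    have hsinC : ((Real.sin ((j : ℝ) * θ) : ℝ) : ℂ) + ((Real.sin (((j : ℝ) + 2) * θ) : ℝ) : ℂ)
        = 2 * ((Real.sin (((j : ℝ) + 1) * θ) : ℝ) : ℂ) * ((Real.cos θ : ℝ) : ℂ) := by
      exact_mod_cast hsinR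
    simp only [hw, hμ, hC, Nat.cast_add, Nat.cast_ofNat, Nat.cast_one]
    set A : ℂ := ((Real.sin ((j : ℝ) * θ) : ℝ) : ℂ)
    set B : ℂ := ((Real.sin (((j : ℝ) + 2) * θ) : ℝ) : ℂ)
    set D : ℂ := ((Real.sin (((j : ℝ) + 1) * θ) : ℝ) : ℂ)
    set Cc : ℂ := ((Real.cos θ : ℝ) : ℂ)
    have hB : B = 2 * D * Cc - A := by linear_combination hsinC
    rw [hB]
    set P : ℂ := (α / s) ^ j with hP
    have h2 : γ * ((α / s) * (α / s)) = α := by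
      field_simp
      linear_combination -hs
    have h3 : s * (α / s) = α := by field_simp
    simp only [pow_succ]
    linear_combination (P * (2 * D * Cc - A)) * h2 - (2 * Cc * P * D) * h3
  set v : Fin n → ℂ := fun j => w ((j : ℕ) + 1) with hv
  have hn0 : 0 < n := lt_of_lt_of_le hk1 hk2
  have hθpos : 0 < θ := by
    rw [hθ]
    have : (0 : ℝ) < k := by exact_mod_cast hk1
    have hπ := Real.pi_pos
    positivity
  have hθlt : θ < Real.pi := by
    rw [hθ, div_lt_iff₀ (by positivity)]
    have hkn : (k : ℝ) < (n : ℝ) + 1 := by exact_mod_cast Nat.lt_succ_of_le hk2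
    nlinarith [Real.pi_pos]
  have hsinθ : Real.sin θ ≠ 0 := ne_of_gt (Real.sin_pos_of_pos_of_lt_pi hθpos hθlt)
  have hv0 : v ≠ 0 := by
    intro h
    have h1 : v ⟨0, hn0⟩ = 0 := by rw [h]; rfl
    have h2 : v ⟨0, hn0⟩ = (α / s) * ((Real.sin θ : ℝ) : ℂ) := by
      simp [hv, hw]
    rw [h2] at h1
    exact mul_ne_zero (div_ne_zero hα hs0) (Complex.ofReal_ne_zero.mpr hsinθ) h1
  have hsum : ∀ i : Fin n, M₂.mulVec v i = α * w i + γ * w ((i : ℕ) + 2) := by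
    intro i
    have expand : ∀ j : Fin n, M₂ i j * v j =
        (if (i : ℕ) = (j : ℕ) + 1 then α * w i else 0)
          + (if (j : ℕ) = (i : ℕ) + 1 then γ * w ((i : ℕ) + 2) else 0) := by
      intro j
      rw [hM]
      by_cases h1 : (i : ℕ) = (j : ℕ) + 1
      · rw [if_pos h1, if_pos h1, if_neg (by omega)]
        simp only [hv]
        rw [← h1]
        ring
      · rw [if_neg h1, if_neg h1]
        by_cases h2 : (j : ℕ) = (i : ℕ) + 1
        · rw [if_pos h2, if_pos h2]
          simp only [hv]
          rw [h2, show (i : ℕ) + 1 + 1 = (i : ℕ) + 2 from rfl]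
          ring
        · rw [if_neg h2, if_neg h2]
          simp
    have : M₂.mulVec v i = ∑ j : Fin n, M₂ i j * v j := rfl
    rw [this, Finset.sum_congr rfl (fun j _ => expand j), Finset.sum_add_distrib]
    congr 1
    · rcases Nat.eq_zero_or_pos (i : ℕ) with h0 | hpos
      · rw [h0, hw0, mul_zero]
        apply Finset.sum_eq_zero
        intro j _
        rw [if_neg (by omega)]
      · obtain ⟨m, hm⟩ : ∃ m, (i : ℕ) = m + 1 := ⟨(i : ℕ) - 1, by omega⟩
        have hmn : m < n := by omega
        have key : ∀ j : Fin n, (if (i : ℕ) = (j : ℕ) + 1 then α * w i else 0)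
            = (if j = ⟨m, hmn⟩ then α * w i else 0) := by
          intro j
          apply if_congr _ rfl rfl
          constructor
          · intro h; apply Fin.ext; simp; omega
          · intro h; subst h; simp [hm]
        rw [Finset.sum_congr rfl (fun j _ => key j), Finset.sum_ite_eq' Finset.univ]
        simp
    · by_cases hlt : (i : ℕ) + 1 < n
      · have key : ∀ j : Fin n, (if (j : ℕ) = (i : ℕ) + 1 then γ * w ((i : ℕ) + 2) else 0)
            = (if j = ⟨(i : ℕ) + 1, hlt⟩ then γ * w ((i : ℕ) + 2) else 0) := by
          intro j
          apply if_congr _ rfl rfl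
          constructor
          · intro h; apply Fin.ext; simpa using h
          · intro h; subst h; simp
        rw [Finset.sum_congr rfl (fun j _ => key j), Finset.sum_ite_eq' Finset.univ]
        simp
      · have hin : (i : ℕ) + 1 = n := by omega
        have : ∑ j : Fin n, (if (j : ℕ) = (i : ℕ) + 1 then γ * w ((i : ℕ) + 2) else 0) = 0 := by
          apply Finset.sum_eq_zero
          intro j _
          rw [if_neg (by omega)]
        rw [this]
        have : (i : ℕ) + 2 = n + 1 := by omega
        rw [this, hwn, mul_zero]
  have hmv : (μ • (1 : Matrix (Fin n) (Fin n) ℂ) - M₂).mulVec v = 0 := by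
    funext i
    rw [Matrix.sub_mulVec, Matrix.smul_mulVec, Matrix.one_mulVec]
    simp only [Pi.sub_apply, Pi.smul_apply, smul_eq_mul, Pi.zero_apply]
    rw [hsum i]
    have h := hrec (i : ℕ)
    simp only [hv]
    linear_combination -h
  have hdet : (μ • (1 : Matrix (Fin n) (Fin n) ℂ) - M₂).det = 0 :=
    Matrix.exists_mulVec_eq_zero_iff.mp ⟨v, hv0, hmv⟩
  rw [hθc]
  show M₂.charpoly.eval μ = 0
  rw [charpoly_eval_aux]
  exact hdet

/-- The eigenvalues of the `n×n` matrix with `α` on the subdiagonal and `γ` on the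
superdiagonal (and zeros elsewhere), with `α·γ ≠ 0`, are `2·√(αγ)·cos(kπ/(n+1))`,
`k = 1,…,n`, where `s` is a fixed complex square root of `αγ`. -/
theorem eigenvalues_bidiagonal {n : ℕ} (α γ s : ℂ) (hαγ : α * γ ≠ 0) (hs : s ^ 2 = α * γ)
    (M₂ : Matrix (Fin n) (Fin n) ℂ)
    (hM : ∀ i j : Fin n, M₂ i j =
      if (i : ℕ) = (j : ℕ) + 1 then α else if (j : ℕ) = (i : ℕ) + 1 then γ else 0) :
    {μ : ℂ | M₂.charpoly.IsRoot μ} =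
      {μ : ℂ | ∃ k ∈ Finset.Icc 1 n,
        μ = 2 * s * Complex.cos ((k : ℂ) * Real.pi / ((n : ℂ) + 1))} := by
  have hα : α ≠ 0 := fun h => hαγ (by simp [h])
  have hγ : γ ≠ 0 := fun h => hαγ (by simp [h])
  have hs0 : s ≠ 0 := by
    intro h; apply hαγ; rw [← hs, h]; ring
  set f : ℕ → ℂ := fun k => 2 * s * Complex.cos ((k : ℂ) * Real.pi / ((n : ℂ) + 1)) with hf
  have hroot : ∀ k ∈ Finset.Icc 1 n, M₂.charpoly.IsRoot (f k) := fun k hk => by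
    rw [Finset.mem_Icc] at hk
    exact isRoot_aux α γ s hα hγ hs0 hs M₂ hM k hk.1 hk.2
  -- f is injective on Icc 1 n
  have hinj : Set.InjOn f (Finset.Icc 1 n) := by
    intro a ha b hb hab
    rw [Finset.coe_Icc, Set.mem_Icc] at ha hb
    have hca : (a : ℂ) * Real.pi / ((n : ℂ) + 1) = ((a * Real.pi / (n + 1) : ℝ) : ℂ) := by
      push_cast; ring
    have hcb : (b : ℂ) * Real.pi / ((n : ℂ) + 1) = ((b * Real.pi / (n + 1) : ℝ) : ℂ) := by
      push_cast; ring
    simp only [hf, hca, hcb, ← Complex.ofReal_cos] at hab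
    have hcos : Real.cos (a * Real.pi / (n + 1)) = Real.cos (b * Real.pi / (n + 1)) := by
      have := mul_left_cancel₀ (mul_ne_zero two_ne_zero hs0) hab
      exact_mod_cast this
    have hmem : ∀ c : ℕ, c ≤ n → (c : ℝ) * Real.pi / (n + 1) ∈ Set.Icc 0 Real.pi := by
      intro c hc
      constructor
      · positivity
      · rw [div_le_iff₀ (by positivity)]
        have : (c : ℝ) ≤ n := by exact_mod_cast hc
        nlinarith [Real.pi_pos]
    have := Real.injOn_cos (hmem a ha.2) (hmem b hb.2) hcos
    have hpi := Real.pi_pos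
    have hne : ((n : ℝ) + 1) ≠ 0 := by positivity
    have h1 : (a : ℝ) * Real.pi = (b : ℝ) * Real.pi := by
      have := congrArg (fun x : ℝ => x * ((n : ℝ) + 1)) this
      simpa [div_mul_cancel₀, hne] using this
    have h2 : (a : ℝ) = b := by
      exact mul_right_cancel₀ (ne_of_gt hpi) h1
    exact_mod_cast h2
  set T : Finset ℂ := (Finset.Icc 1 n).image f with hT
  have hTcard : T.card = n := by
    rw [hT, Finset.card_image_of_injOn hinj, Nat.card_Icc]
    omega
  have hP0 : M₂.charpoly ≠ 0 := M₂.charpoly_monic.ne_zero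
  have hdeg : M₂.charpoly.natDegree = n := by
    rw [Matrix.charpoly_natDegree_eq_dim, Fintype.card_fin]
  have hsub : T ⊆ M₂.charpoly.roots.toFinset := by
    intro μ hμ
    rw [hT, Finset.mem_image] at hμ
    obtain ⟨k, hk, rfl⟩ := hμ
    rw [Multiset.mem_toFinset, Polynomial.mem_roots hP0]
    exact hroot k hk
  have hcardle : M₂.charpoly.roots.toFinset.card ≤ n := by
    calc M₂.charpoly.roots.toFinset.card ≤ Multiset.card M₂.charpoly.roots :=
          Multiset.toFinset_card_le _
      _ ≤ M₂.charpoly.natDegree := Polynomial.card_roots' _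
      _ = n := hdeg
  have hTeq : T = M₂.charpoly.roots.toFinset :=
    Finset.eq_of_subset_of_card_le hsub (by rw [hTcard]; exact hcardle)
  ext μ
  simp only [Set.mem_setOf_eq]
  constructor
  · intro h
    have hμ : μ ∈ M₂.charpoly.roots.toFinset := by
      rw [Multiset.mem_toFinset, Polynomial.mem_roots hP0]
      exact h
    rw [← hTeq, hT, Finset.mem_image] at hμ
    obtain ⟨k, hk, rfl⟩ := hμ
    exact ⟨k, hk, rfl⟩
  · rintro ⟨k, hk, rfl⟩
    exact hroot k hk
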